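/- For any real θ and natural numbers n, k with 3(2n+1) ≤ 2k+1 < 5(2n+1), the sum (1/(2n+1)) ∑_{ℓ=0}^{2n} (cos((θ+2πℓ)/(2n+1)))^{2k+1} equals (1/4^k)·[C(2k+1,k−n)·cos θ + C(2k+1,k−3n−1)·cos(3θ)]. -/

import Mathlib

open Real Finset

private lemma aux_cos_pow (M : ℕ) (z : ℂ) :
    (2:ℂ)^M * Complex.cos z ^ M
      = ∑ j ∈ Finset.range (M+1),
          ((M.choose j : ℕ) : ℂ) * Complex.exp ((2*(j:ℂ) - M) * (z * Complex.I)) := by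
  rw [← mul_pow, Complex.two_cos, add_pow]
  refine Finset.sum_congr rfl fun j hj => ?_
  rw [Finset.mem_range] at hj
  have hj' : j ≤ M := by omega
  rw [← Complex.exp_nat_mul, ← Complex.exp_nat_mul, ← Complex.exp_add, mul_comm]
  congr 2
  push_cast [Nat.cast_sub hj']
  ring

private lemma aux_geom (N : ℕ) (c : ℂ) (h : Complex.exp ((N:ℂ) * c) = 1) :
    ∑ ℓ ∈ Finset.range N, Complex.exp c ^ ℓ
      = if Complex.exp c = 1 then (N:ℂ) else 0 := by
  split_ifs with h1
  · simp [h1]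
  · rw [geom_sum_eq h1, ← Complex.exp_nat_mul, h, sub_self, zero_div]

private lemma aux_key (θ : ℝ) (n k : ℕ) (h1 : 3 * (2 * n + 1) ≤ 2 * k + 1)
    (h2 : 2 * k + 1 < 5 * (2 * n + 1)) :
    ∑ ℓ ∈ Finset.range (2*n+1),
        Complex.cos (((θ:ℂ) + 2*(π:ℂ)*(ℓ:ℕ)) / (2*(n:ℂ)+1)) ^ (2*k+1)
      = (2*(n:ℂ)+1) / 4^k * ((((2*k+1).choose (k-n) : ℕ) : ℂ) * Complex.cos (θ:ℂ)
          + (((2*k+1).choose (k-3*n-1) : ℕ) : ℂ) * Complex.cos (3*(θ:ℂ))) := by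
  have hk : 3*n + 1 ≤ k := by omega
  have hD : (2*(n:ℂ)+1) ≠ 0 := by
    have : ((2*n+1 : ℕ) : ℂ) ≠ 0 := Nat.cast_ne_zero.mpr (by omega)
    push_cast at this; exact this
  have hπI : (2*(π:ℂ)*Complex.I) ≠ 0 := by
    refine mul_ne_zero (mul_ne_zero two_ne_zero ?_) Complex.I_ne_zero
    exact Complex.ofReal_ne_zero.mpr Real.pi_ne_zero
  -- abbreviations
  set c : ℕ → ℂ := fun j => 2*(j:ℂ) - (2*k+1 : ℕ) with hc
  set E : ℕ → ℂ := fun j => Complex.exp (c j * ((θ:ℂ)/(2*(n:ℂ)+1)) * Complex.I) with hE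
  set W : ℕ → ℂ := fun j => Complex.exp (c j * (2*(π:ℂ)/(2*(n:ℂ)+1)) * Complex.I) with hW
  -- step 1 : expand each cosine power
  have expand : ∀ ℓ : ℕ,
      (2:ℂ)^(2*k+1) * Complex.cos (((θ:ℂ) + 2*(π:ℂ)*(ℓ:ℕ)) / (2*(n:ℂ)+1)) ^ (2*k+1)
        = ∑ j ∈ Finset.range (2*k+2),
            (((2*k+1).choose j : ℕ) : ℂ) * (E j * W j ^ ℓ) := by
    intro ℓ
    rw [aux_cos_pow (2*k+1)]
    refine Finset.sum_congr rfl fun j hj => ?_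
    rw [hE, hW, hc]
    simp only
    rw [← Complex.exp_nat_mul, ← Complex.exp_add]
    congr 2
    push_cast
    field_simp
  -- the N * W j = multiple of 2πI fact
  have hNW : ∀ j : ℕ, Complex.exp ((((2*n+1:ℕ)):ℂ) * (c j * (2*(π:ℂ)/(2*(n:ℂ)+1)) * Complex.I)) = 1 := by
    intro j
    have e : ((((2*n+1:ℕ)):ℂ)) * (c j * (2*(π:ℂ)/(2*(n:ℂ)+1)) * Complex.I)
        = ((2*(j:ℤ) - (2*k+1) : ℤ) : ℂ) * (2*(π:ℂ)*Complex.I) := by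
      rw [hc]; simp only; push_cast; field_simp
    rw [e, Complex.exp_int_mul_two_pi_mul_I]
  -- characterize W j = 1
  have hWiff : ∀ j : ℕ, (W j = 1) ↔ ((2*n+1 : ℤ) ∣ 2*(j:ℤ) - (2*k+1)) := by
    intro j
    rw [hW]; simp only
    rw [Complex.exp_eq_one_iff]
    constructor
    · rintro ⟨m, hm⟩
      refine ⟨m, ?_⟩
      have e : c j * (2*(π:ℂ)*Complex.I) = (c j * (2*(π:ℂ)/(2*(n:ℂ)+1)) * Complex.I) * (2*(n:ℂ)+1) := by
        field_simp
      rw [hm] at e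
      have e2 : c j * (2*(π:ℂ)*Complex.I) = ((m:ℂ) * (2*(n:ℂ)+1)) * (2*(π:ℂ)*Complex.I) := by
        rw [e]; ring
      have e3 := mul_right_cancel₀ hπI e2
      rw [hc] at e3; simp only at e3
      have e4 : ((2*(j:ℤ) - (2*k+1) : ℤ) : ℂ) = (((2*n+1 : ℤ) * m : ℤ) : ℂ) := by
        push_cast
        push_cast at e3
        linear_combination e3
      exact_mod_cast e4
    · rintro ⟨m, hm⟩
      refine ⟨m, ?_⟩
      have hcj : c j = (m:ℂ) * (2*(n:ℂ)+1) := by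
        rw [hc]; simp only
        have : ((2*(j:ℤ) - (2*k+1) : ℤ) : ℂ) = (((2*n+1 : ℤ) * m : ℤ) : ℂ) := congrArg (fun z : ℤ => (z:ℂ)) hm
        push_cast at this
        push_cast
        linear_combination this
      rw [hcj]
      field_simp
  -- the scaled sum
  have main : (2:ℂ)^(2*k+1) * ∑ ℓ ∈ Finset.range (2*n+1),
      Complex.cos (((θ:ℂ) + 2*(π:ℂ)*(ℓ:ℕ)) / (2*(n:ℂ)+1)) ^ (2*k+1)
      = ∑ j ∈ Finset.range (2*k+2),
          (((2*k+1).choose j : ℕ) : ℂ) * E j * (if W j = 1 then ((2*n+1:ℕ):ℂ) else 0) := by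
    rw [Finset.mul_sum]
    simp only [expand]
    rw [Finset.sum_comm]
    refine Finset.sum_congr rfl fun j _ => ?_
    rw [← Finset.mul_sum, ← Finset.mul_sum]
    rw [hW]; simp only
    rw [aux_geom (2*n+1) _ (hNW j)]
    exact (mul_assoc _ _ _).symm
  -- terms outside the four special indices vanish
  have hclass : ∀ j ∈ Finset.range (2*k+2), j ∉ ({k-3*n-1, k-n, k+n+1, k+3*n+2} : Finset ℕ) →
      (((2*k+1).choose j : ℕ) : ℂ) * E j * (if W j = 1 then ((2*n+1:ℕ):ℂ) else 0) = 0 := by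
    intro j hj hjS
    rw [Finset.mem_range] at hj
    simp only [Finset.mem_insert, Finset.mem_singleton] at hjS
    push_neg at hjS
    have hW0 : ¬ (W j = 1) := by
      rw [hWiff]
      rintro ⟨m, hm⟩
      have hjZ : (j:ℤ) ≤ 2*(k:ℤ)+1 := by omega
      have h2Z : 2*(k:ℤ)+1 < 5*(2*(n:ℤ)+1) := by omega
      have h1Z : 3*(2*(n:ℤ)+1) ≤ 2*(k:ℤ)+1 := by omega
      have hub : m < 5 := by
        by_contra hm5
        push_neg at hm5
        have h5 := mul_le_mul_of_nonneg_left hm5 (show (0:ℤ) ≤ 2*n+1 by omega)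
        linarith [hm, h5]
      have hlb : -5 < m := by
        by_contra hm5
        push_neg at hm5
        have h5 := mul_le_mul_of_nonneg_left hm5 (show (0:ℤ) ≤ 2*n+1 by omega)
        linarith [hm, h5]
      interval_cases m <;> omega
    rw [if_neg hW0, mul_zero]
  have hsub : ({k-3*n-1, k-n, k+n+1, k+3*n+2} : Finset ℕ) ⊆ Finset.range (2*k+2) := by
    intro j hj
    simp only [Finset.mem_insert, Finset.mem_singleton] at hj
    rw [Finset.mem_range]
    rcases hj with rfl|rfl|rfl|rfl <;> omega
  rw [← Finset.sum_subset hsub hclass] at main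
  rw [Finset.sum_insert (by simp only [Finset.mem_insert, Finset.mem_singleton]; push_neg; omega),
      Finset.sum_insert (by simp only [Finset.mem_insert, Finset.mem_singleton]; push_neg; omega),
      Finset.sum_insert (by simp only [Finset.mem_singleton]; omega),
      Finset.sum_singleton] at main
  -- evaluate the four terms
  have hw1 : W (k-n) = 1 := (hWiff _).mpr ⟨-1, by omega⟩
  have hw2 : W (k+n+1) = 1 := (hWiff _).mpr ⟨1, by omega⟩
  have hw3 : W (k-3*n-1) = 1 := (hWiff _).mpr ⟨-3, by omega⟩
  have hw4 : W (k+3*n+2) = 1 := (hWiff _).mpr ⟨3, by omega⟩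
  have hcast1 : ((k-n : ℕ):ℂ) = (k:ℂ) - n := by
    rw [Nat.cast_sub (show n ≤ k by omega)]
  have hcast3 : ((k-3*n-1 : ℕ):ℂ) = (k:ℂ) - 3*n - 1 := by
    rw [show k-3*n-1 = k - (3*n+1) by omega, Nat.cast_sub (show 3*n+1 ≤ k by omega)]
    push_cast; ring
  have hE1 : E (k-n) = Complex.exp (-(θ:ℂ) * Complex.I) := by
    rw [hE]; simp only; congr 1
    rw [hc]; simp only [hcast1]; push_cast; field_simp; ring
  have hE2 : E (k+n+1) = Complex.exp ((θ:ℂ) * Complex.I) := by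
    rw [hE]; simp only; congr 1
    rw [hc]; simp only; push_cast; field_simp; ring
  have hE3 : E (k-3*n-1) = Complex.exp (-(3*(θ:ℂ)) * Complex.I) := by
    rw [hE]; simp only; congr 1
    rw [hc]; simp only [hcast3]; push_cast; field_simp; ring
  have hE4 : E (k+3*n+2) = Complex.exp ((3*(θ:ℂ)) * Complex.I) := by
    rw [hE]; simp only; congr 1
    rw [hc]; simp only; push_cast; field_simp; ring
  have hch1 : (2*k+1).choose (k+n+1) = (2*k+1).choose (k-n) := by
    have h := Nat.choose_symm (show k+n+1 ≤ 2*k+1 by omega)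
    rw [show 2*k+1 - (k+n+1) = k - n by omega] at h
    exact h.symm
  have hch2 : (2*k+1).choose (k+3*n+2) = (2*k+1).choose (k-3*n-1) := by
    have h := Nat.choose_symm (show k+3*n+2 ≤ 2*k+1 by omega)
    rw [show 2*k+1 - (k+3*n+2) = k - 3*n - 1 by omega] at h
    exact h.symm
  rw [if_pos hw1, if_pos hw2, if_pos hw3, if_pos hw4, hE1, hE2, hE3, hE4, hch1, hch2] at main
  push_cast at main
  -- finish
  have h4 : ((4:ℂ))^k ≠ 0 := pow_ne_zero _ (by norm_num)
  rw [div_mul_eq_mul_div, eq_div_iff h4]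
  apply mul_left_cancel₀ (show (2:ℂ) ≠ 0 from two_ne_zero)
  have h2pow : (2:ℂ)^(2*k+1) = 4^k * 2 := by
    rw [pow_succ, pow_mul]; norm_num
  have key2 : 2 * ((∑ ℓ ∈ Finset.range (2*n+1),
      Complex.cos (((θ:ℂ) + 2*(π:ℂ)*(ℓ:ℕ)) / (2*(n:ℂ)+1)) ^ (2*k+1)) * 4^k)
      = (2:ℂ)^(2*k+1) * ∑ ℓ ∈ Finset.range (2*n+1),
      Complex.cos (((θ:ℂ) + 2*(π:ℂ)*(ℓ:ℕ)) / (2*(n:ℂ)+1)) ^ (2*k+1) := by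
    rw [h2pow]; ring
  rw [key2, main]
  have t1 := Complex.two_cos ((θ:ℂ))
  have t2 := Complex.two_cos (3*(θ:ℂ))
  linear_combination (-(2*(n:ℂ)+1) * (((2*k+1).choose (k-n) : ℕ):ℂ)) * t1
    + (-(2*(n:ℂ)+1) * (((2*k+1).choose (k-3*n-1) : ℕ):ℂ)) * t2


theorem stmt_9 (θ : ℝ) (n k : ℕ) (h1 : 3 * (2 * n + 1) ≤ 2 * k + 1)
    (h2 : 2 * k + 1 < 5 * (2 * n + 1)) :
    (1 / (2 * n + 1 : ℝ)) * ∑ ℓ ∈ Finset.range (2 * n + 1),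
        (Real.cos ((θ + 2 * Real.pi * ℓ) / (2 * n + 1))) ^ (2 * k + 1)
      = (1 / 4 ^ k) * ((Nat.choose (2 * k + 1) (k - n) : ℝ) * Real.cos θ
          + (Nat.choose (2 * k + 1) (k - 3 * n - 1) : ℝ) * Real.cos (3 * θ)) := by
  have key := aux_key θ n k h1 h2
  have hNR : ((2:ℝ)*n+1) ≠ 0 := by positivity
  have keyR : ∑ ℓ ∈ Finset.range (2*n+1),
      Real.cos ((θ + 2*π*ℓ) / (2*n+1)) ^ (2*k+1)
      = (2*(n:ℝ)+1) / 4^k * (((2*k+1).choose (k-n) : ℝ) * Real.cos θ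
          + ((2*k+1).choose (k-3*n-1) : ℝ) * Real.cos (3*θ)) := by
    apply Complex.ofReal_injective
    push_cast
    exact key
  rw [keyR]
  field_simp
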